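/- The constructed Moore machine M_{A,N} is a filter for A with buffer size N: for any word w = a1...an ∈ Σ*, the output of M_{A,N} on the input w⊥^N is of the form ⊥^N w' where w' = b1...bn and each bi ∈ {ai, ⊥}. -/
import Mathlib


attribute [local instance] Classical.propDecidable

/-- A nondeterministic finite automaton with a single initial state. -/
structure NFA' (α : Type) (σ : Type) where
  start : σ
  accept : Set σ
  step : σ → α → σ → Prop

namespace NFA'
variable {α σ : Type}

def stepSet (A : NFA' α σ) (S : Set σ) (a : α) : Set σ := {s' | ∃ s ∈ S, A.step s a s'}

/-- States reachable from a set of states by reading a word. -/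
def evalFrom (A : NFA' α σ) (S : Set σ) (u : List α) : Set σ := u.foldl A.stepSet S

/-- States reachable from the initial state by reading a word. -/
def eval (A : NFA' α σ) (u : List α) : Set σ := A.evalFrom {A.start} u

/-- The NFA accepts the word `u`. -/
def accepts (A : NFA' α σ) (u : List α) : Prop := ∃ s ∈ A.eval u, s ∈ A.accept

end NFA'

/-- `sub w i j` is the subword `w[i..j]` (1-indexed, inclusive). -/
def sub {β : Type} (w : List β) (i j : ℕ) : List β := (w.drop (i - 1)).take (j - i + 1)

/-- A Moore machine. -/
structure Moore (I O Q : Type) where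
  init : Q
  trans : Q → I → Q
  out : Q → O

/-- The output word of a Moore machine over an input word:
`Λ(q₀) Λ(q₁) … Λ(q_{m-1})` where `q₀ q₁ … q_m` is the run. -/
def Moore.output {I O Q : Type} (M : Moore I O Q) (u : List I) : List O :=
  (List.range u.length).map fun k => M.out ((u.take k).foldl M.trans M.init)

/-- The input word `w` padded with `N` copies of `⊥` at the end. -/
def pad {α : Type} (w : List α) (N : ℕ) : List (Option α) :=
  w.map some ++ List.replicate N none

/-- One step of the deterministic "non-buffer part" (subset construction with
modular counters): `{(s', (n mod N)+1) | (s,n) ∈ S, (s,a,s') ∈ E} ∪ {(s₀,0)}`.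
There are no transitions on `⊥`. -/
def nbStep {α σ : Type} (A : NFA' α σ) (N : ℕ) (S : Set (σ × ℕ)) (a : Option α) :
    Set (σ × ℕ) :=
  insert (A.start, 0)
    {p | ∃ s n a', (s, n) ∈ S ∧ a = some a' ∧ A.step s a' p.1 ∧ p.2 = n % N + 1}

/-- `ψ(S) = max { n | (s,n) ∈ S, s ∈ S_F }`. -/
noncomputable def psi {α σ : Type} (A : NFA' α σ) (S : Set (σ × ℕ)) : ℕ :=
  sSup {n | ∃ s, s ∈ A.accept ∧ (s, n) ∈ S}

/-- The filter Moore machine `M_{A,N}`: subset construction with modular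
counters, together with a FIFO buffer of `N` characters labeled
`pass` (`true`) or `mask` (`false`). -/
noncomputable def filterMM {α σ : Type} (A : NFA' α σ) (N : ℕ) :
    Moore (Option α) (Option α) (Set (σ × ℕ) × List (Option α) × List Bool) where
  init := ({(A.start, 0)}, List.replicate N none, List.replicate N false)
  trans := fun q a =>
    let S' := nbStep A N q.1 a
    let lab := q.2.2
    let lab' : List Bool :=
      if ∃ s, (s, N) ∈ S' then List.replicate N true
      else if ∃ s n, s ∈ A.accept ∧ (s, n) ∈ S' then
        lab.tail.take (N - psi A S') ++ List.replicate (psi A S') true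
      else lab.tail ++ [false]
    (S', q.2.1.tail ++ [a], lab')
  out := fun q => if q.2.2.headI then q.2.1.headI else none

/-- `M` is a filter with buffer size `N` (Definition of filter). -/
def IsFilter {α Q : Type} (N : ℕ) (M : Moore (Option α) (Option α) Q) : Prop :=
  ∀ w : List α, ∃ w' : List (Option α),
    M.output (pad w N) = List.replicate N (none : Option α) ++ w' ∧
    w'.length = w.length ∧
    ∀ k, k < w.length → w'[k]? = some none ∨ w'[k]? = (w[k]?).map some


private lemma headI_of_head? {β : Type} [Inhabited β] {l : List β} {a : β}
    (h : l.head? = some a) : l.headI = a := by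
  cases l with
  | nil => simp at h
  | cons x xs => simpa using h

private lemma buf_spec {α σ : Type} (A : NFA' α σ) (N : ℕ) (hN : 1 ≤ N)
    (v : List (Option α)) :
    (v.foldl (filterMM A N).trans (filterMM A N).init).2.1
      = (List.replicate N (none : Option α) ++ v).drop v.length := by
  induction v using List.reverseRecOn with
  | nil => simp [filterMM]
  | append_singleton u a ih =>
    rw [List.foldl_append, List.foldl_cons, List.foldl_nil]
    have h1 : ((u.foldl (filterMM A N).trans (filterMM A N).init).2.1).tail ++ [a]
        = (List.replicate N (none : Option α) ++ u).drop (u.length + 1) ++ [a] := by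
      rw [ih, List.tail_drop]
    have h2 : u.length + 1 ≤ (List.replicate N (none : Option α) ++ u).length := by
      simp; omega
    show ((u.foldl (filterMM A N).trans (filterMM A N).init).2.1).tail ++ [a] = _
    rw [h1, ← List.drop_append_of_le_length h2, List.append_assoc]
    simp

/-- the constructed Moore machine `M_{A,N}` is a filter for `A`
with buffer size `N`. -/
theorem filterMM_isFilter {α σ : Type} (A : NFA' α σ) (N : ℕ) (hN : 1 ≤ N) :
    IsFilter N (filterMM A N) := by
  intro w
  set M := filterMM A N with hM
  set L := pad w N with hL
  have hLlen : L.length = w.length + N := by simp [hL, pad]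
  -- value of the output at position k
  have hout : ∀ k, k < L.length →
      M.out ((L.take k).foldl M.trans M.init)
        = (if ((L.take k).foldl M.trans M.init).2.2.headI then
            (List.replicate N (none : Option α) ++ L.take k)[k]?.iget else none) := by
    intro k hk
    have htl : (L.take k).length = k := by
      rw [List.length_take]; omega
    have hb := buf_spec A N hN (L.take k)
    rw [htl] at hb
    show (if _ then ((L.take k).foldl M.trans M.init).2.1.headI else none) = _
    rw [hb]
    have hlen : k < (List.replicate N (none : Option α) ++ L.take k).length := by
      simp [htl]; omega
    have hx : (List.replicate N (none : Option α) ++ L.take k)[k]?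
        = some ((List.replicate N (none : Option α) ++ L.take k)[k]'hlen) :=
      List.getElem?_eq_getElem hlen
    have hh : ((List.replicate N (none : Option α) ++ L.take k).drop k).headI
        = (List.replicate N (none : Option α) ++ L.take k)[k]'hlen := by
      apply headI_of_head?
      rw [List.head?_drop, hx]
    rw [hh, hx]
  -- entries: for k < N the entry is none
  have hnone : ∀ k, k < N → M.out ((L.take k).foldl M.trans M.init) = none := by
    intro k hk
    have hkL : k < L.length := by omega
    rw [hout k hkL]
    have : (List.replicate N (none : Option α) ++ L.take k)[k]?
        = some none := by
      rw [List.getElem?_append]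
      simp [hk, List.getElem?_replicate, hk]
    rw [this]
    split <;> rfl
  -- entries for k ≥ N
  have hsome : ∀ j (hj : j < w.length),
      M.out ((L.take (N + j)).foldl M.trans M.init) = none ∨
      M.out ((L.take (N + j)).foldl M.trans M.init) = some (w[j]'hj) := by
    intro j hj
    have hkL : N + j < L.length := by omega
    rw [hout _ hkL]
    have hgw : (List.replicate N (none : Option α) ++ L.take (N + j))[N + j]?
        = some (some (w[j]'hj)) := by
      rw [List.getElem?_append]
      have h1 : ¬ N + j < (List.replicate N (none : Option α)).length := by simp
      rw [if_neg h1]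
      simp only [List.length_replicate, Nat.add_sub_cancel_left]
      have h2 : (L.take (N + j))[j]? = L[j]? := by
        rw [List.getElem?_take, if_pos (by omega)]
      rw [h2]
      show (pad w N)[j]? = _
      unfold pad
      rw [List.getElem?_append, if_pos (by simpa using hj), List.getElem?_map,
        List.getElem?_eq_getElem hj]
      rfl
    rw [hgw]
    split
    · right; rfl
    · left; rfl
  refine ⟨(List.range w.length).map
      (fun j => M.out ((L.take (N + j)).foldl M.trans M.init)), ?_, by simp, ?_⟩
  · show (List.range L.length).map _ = _
    rw [hLlen, Nat.add_comm, List.range_add, List.map_append, List.map_map]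
    congr 1
    · rw [List.eq_replicate_iff]
      refine ⟨by simp, ?_⟩
      intro b hb
      simp only [List.mem_map, List.mem_range] at hb
      obtain ⟨k, hk, rfl⟩ := hb
      exact hnone k hk
  · intro k hk
    rw [List.getElem?_map, List.getElem?_range hk, Option.map_some]
    rcases hsome k hk with h | h
    · left; rw [h]
    · right
      rw [h, List.getElem?_eq_getElem hk]
      rfl
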